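/- arXiv:2011.07582 — 6 statements merged into one kernel-verified Lean document; each statement's English description precedes it below -/
import Mathlib

section
/- Let M, n, k be nonnegative integers with 2k ≤ n ≤ M and M ≥ 2. Let 𝓜 be a set with M elements, 𝓝 ⊆ 𝓜 a subset with n elements, and 𝓣 = 𝓜^n the set of n-tuples with components in 𝓜. Then Σ_{x ∈ 𝓣} m_k(x)² = n(n−1)·C(n,k)·C(n−k,k)·(M−2)^(n−2k) + n·C(n,k)·(M−1)^(n−k). -/
open Finset

private lemma fiber_one {M n : ℕ} (y : Fin M) (s : Finset (Fin n)) :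
    (univ.filter (fun x : Fin n → Fin M => univ.filter (fun i => x i = y) = s))
    = Fintype.piFinset (fun i => if i ∈ s then {y} else univ.erase y) := by
  ext x
  simp only [mem_filter, mem_univ, true_and, Fintype.mem_piFinset]
  constructor
  · intro h i
    have hi := Finset.ext_iff.mp h i
    simp only [mem_filter, mem_univ, true_and] at hi
    by_cases his : i ∈ s
    · simp [his, hi.mpr his]
    · rw [if_neg his]
      simp only [Finset.mem_erase, Finset.mem_univ, and_true]
      exact fun h' => his (hi.mp h')
  · intro h
    ext i
    simp only [mem_filter, mem_univ, true_and]
    have hi := h i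
    by_cases his : i ∈ s
    · simp [his] at hi ⊢; exact hi
    · simp [his] at hi ⊢; exact hi

private lemma card_one {M n : ℕ} (y : Fin M) (s : Finset (Fin n)) :
    (univ.filter (fun x : Fin n → Fin M => univ.filter (fun i => x i = y) = s)).card
    = (M - 1) ^ (n - s.card) := by
  rw [fiber_one, Fintype.card_piFinset, ← Finset.prod_mul_prod_compl s]
  have h1 : ∏ i ∈ s, (if i ∈ s then ({y} : Finset (Fin M)) else univ.erase y).card = 1 :=
    Finset.prod_eq_one fun i hi => by simp [hi]
  have h2 : ∀ i ∈ sᶜ, (if i ∈ s then ({y} : Finset (Fin M)) else univ.erase y).card = M - 1 := by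
    intro i hi
    simp [Finset.mem_compl.mp hi, Finset.card_erase_of_mem]
  rw [h1, one_mul, Finset.prod_congr rfl h2, Finset.prod_const, Finset.card_compl,
    Fintype.card_fin]

private lemma lemA {M n k : ℕ} (y : Fin M) :
    (univ.filter (fun x : Fin n → Fin M =>
       (univ.filter (fun i => x i = y)).card = k)).card
    = n.choose k * (M - 1) ^ (n - k) := by
  rw [Finset.card_eq_sum_card_fiberwise
      (f := fun x : Fin n → Fin M => univ.filter (fun i => x i = y))
      (t := univ.powersetCard k)
      (fun x hx => by
        simp only [Finset.mem_coe, mem_filter, mem_univ, true_and] at hx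
        simpa [Finset.mem_powersetCard] using hx)]
  have key : ∀ s ∈ univ.powersetCard k,
      ((univ.filter (fun x : Fin n → Fin M =>
        (univ.filter (fun i => x i = y)).card = k)).filter
        (fun x => univ.filter (fun i => x i = y) = s)).card = (M - 1) ^ (n - k) := by
    intro s hs
    rw [Finset.mem_powersetCard] at hs
    have : ((univ.filter (fun x : Fin n → Fin M =>
        (univ.filter (fun i => x i = y)).card = k)).filter
        (fun x => univ.filter (fun i => x i = y) = s))
        = univ.filter (fun x : Fin n → Fin M => univ.filter (fun i => x i = y) = s) := by
      rw [Finset.filter_filter]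
      apply Finset.filter_congr
      intro x _
      constructor
      · exact fun h => h.2
      · exact fun h => ⟨by rw [h, hs.2], h⟩
    rw [this, _root_.card_one, hs.2]
  rw [Finset.sum_congr rfl key, Finset.sum_const, Finset.card_powersetCard,
    Finset.card_univ, Fintype.card_fin, smul_eq_mul]

private lemma fiber_two {M n : ℕ} {y z : Fin M} (hyz : y ≠ z) {s t : Finset (Fin n)}
    (hst : Disjoint s t) :
    (univ.filter (fun x : Fin n → Fin M =>
      univ.filter (fun i => x i = y) = s ∧ univ.filter (fun i => x i = z) = t))
    = Fintype.piFinset (fun i => if i ∈ s then {y} else if i ∈ t then {z}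
        else (univ.erase y).erase z) := by
  ext x
  simp only [mem_filter, mem_univ, true_and, Fintype.mem_piFinset]
  constructor
  · intro h i
    have hiy := Finset.ext_iff.mp h.1 i
    have hiz := Finset.ext_iff.mp h.2 i
    simp only [mem_filter, mem_univ, true_and] at hiy hiz
    by_cases his : i ∈ s
    · simp [his, hiy.mpr his]
    · rw [if_neg his]
      by_cases hit : i ∈ t
      · simp [hit, hiz.mpr hit]
      · rw [if_neg hit]
        simp only [Finset.mem_erase, Finset.mem_univ, and_true]
        exact ⟨fun h' => hit (hiz.mp h'), fun h' => his (hiy.mp h')⟩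
  · intro h
    constructor
    · ext i
      simp only [mem_filter, mem_univ, true_and]
      have hi := h i
      by_cases his : i ∈ s
      · simp [his] at hi ⊢; exact hi
      · rw [if_neg his] at hi
        simp only [his, iff_false]
        by_cases hit : i ∈ t
        · rw [if_pos hit] at hi
          simp only [Finset.mem_singleton] at hi
          rw [hi]; exact fun h' => hyz h'.symm
        · rw [if_neg hit] at hi
          simp only [Finset.mem_erase, Finset.mem_univ, and_true] at hi
          exact hi.2
    · ext i
      simp only [mem_filter, mem_univ, true_and]
      have hi := h i
      by_cases his : i ∈ s
      · rw [if_pos his] at hi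
        simp only [Finset.mem_singleton] at hi
        have hit : i ∉ t := Finset.disjoint_left.mp hst his
        simp only [hit, iff_false, hi]
        exact hyz
      · rw [if_neg his] at hi
        by_cases hit : i ∈ t
        · simp [hit] at hi ⊢; exact hi
        · rw [if_neg hit] at hi
          simp only [Finset.mem_erase, Finset.mem_univ, and_true] at hi
          simp only [hit, iff_false]
          exact hi.1

private lemma card_two {M n : ℕ} {y z : Fin M} (hyz : y ≠ z) {s t : Finset (Fin n)}
    (hst : Disjoint s t) :
    (univ.filter (fun x : Fin n → Fin M =>
      univ.filter (fun i => x i = y) = s ∧ univ.filter (fun i => x i = z) = t)).card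
    = (M - 2) ^ (n - (s.card + t.card)) := by
  rw [fiber_two hyz hst, Fintype.card_piFinset, ← Finset.prod_mul_prod_compl (s ∪ t),
    Finset.prod_union hst]
  have hy : y ∈ univ.erase z ∨ True := Or.inr trivial
  have h1 : ∏ i ∈ s, (if i ∈ s then ({y} : Finset (Fin M)) else if i ∈ t then {z}
      else (univ.erase y).erase z).card = 1 :=
    Finset.prod_eq_one fun i hi => by simp [hi]
  have h2 : ∏ i ∈ t, (if i ∈ s then ({y} : Finset (Fin M)) else if i ∈ t then {z}
      else (univ.erase y).erase z).card = 1 :=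
    Finset.prod_eq_one fun i hi => by
      rw [if_neg (Finset.disjoint_right.mp hst hi), if_pos hi, Finset.card_singleton]
  have h3 : ∀ i ∈ (s ∪ t)ᶜ, (if i ∈ s then ({y} : Finset (Fin M)) else if i ∈ t then {z}
      else (univ.erase y).erase z).card = M - 2 := by
    intro i hi
    rw [Finset.mem_compl, Finset.mem_union, not_or] at hi
    rw [if_neg hi.1, if_neg hi.2, Finset.card_erase_of_mem, Finset.card_erase_of_mem,
      Finset.card_univ, Fintype.card_fin, Nat.sub_sub]
    · exact Finset.mem_univ y
    · exact Finset.mem_erase.mpr ⟨Ne.symm hyz, Finset.mem_univ z⟩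
  rw [h1, h2, one_mul, one_mul, Finset.prod_congr rfl h3, Finset.prod_const,
    Finset.card_compl, Fintype.card_fin, Finset.card_union_of_disjoint hst]

private lemma lemB {M n k : ℕ} {y z : Fin M} (hyz : y ≠ z) :
    (univ.filter (fun x : Fin n → Fin M =>
       (univ.filter (fun i => x i = y)).card = k ∧
       (univ.filter (fun i => x i = z)).card = k)).card
    = n.choose k * (n - k).choose k * (M - 2) ^ (n - 2 * k) := by
  rw [Finset.card_eq_sum_card_fiberwise
      (f := fun x : Fin n → Fin M =>
        ((⟨univ.filter (fun i => x i = y), univ.filter (fun i => x i = z)⟩ :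
          (_ : Finset (Fin n)) × Finset (Fin n))))
      (t := (univ.powersetCard k).sigma (fun s => sᶜ.powersetCard k))
      (fun x hx => by
        simp only [Finset.mem_coe, mem_filter, mem_univ, true_and] at hx
        rw [Finset.mem_coe, Finset.mem_sigma, Finset.mem_powersetCard, Finset.mem_powersetCard]
        refine ⟨⟨Finset.subset_univ _, hx.1⟩, ?_, hx.2⟩
        intro i hi
        simp only [mem_filter, mem_univ, true_and] at hi
        rw [Finset.mem_compl, mem_filter]
        rintro ⟨-, h'⟩
        exact hyz (hi.symm.trans h').symm)]
  have key : ∀ p ∈ (univ.powersetCard k).sigma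
      (fun s : Finset (Fin n) => sᶜ.powersetCard k),
      ((univ.filter (fun x : Fin n → Fin M =>
        (univ.filter (fun i => x i = y)).card = k ∧
        (univ.filter (fun i => x i = z)).card = k)).filter
        (fun x => (⟨univ.filter (fun i => x i = y), univ.filter (fun i => x i = z)⟩ :
          (_ : Finset (Fin n)) × Finset (Fin n)) = p)).card
      = (M - 2) ^ (n - 2 * k) := by
    rintro ⟨s, t⟩ hp
    rw [Finset.mem_sigma, Finset.mem_powersetCard, Finset.mem_powersetCard] at hp
    have hst : Disjoint s t :=
      Finset.disjoint_left.mpr fun i hi hit =>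
        Finset.mem_compl.mp (hp.2.1 hit) hi
    have heq : ((univ.filter (fun x : Fin n → Fin M =>
        (univ.filter (fun i => x i = y)).card = k ∧
        (univ.filter (fun i => x i = z)).card = k)).filter
        (fun x => (⟨univ.filter (fun i => x i = y), univ.filter (fun i => x i = z)⟩ :
          (_ : Finset (Fin n)) × Finset (Fin n)) = ⟨s, t⟩))
        = univ.filter (fun x : Fin n → Fin M =>
            univ.filter (fun i => x i = y) = s ∧ univ.filter (fun i => x i = z) = t) := by
      rw [Finset.filter_filter]
      apply Finset.filter_congr
      intro x _
      simp only [Sigma.ext_iff, heq_eq_eq]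
      constructor
      · exact fun h => h.2
      · rintro ⟨h1, h2⟩
        exact ⟨⟨by rw [h1, hp.1.2], by rw [h2, hp.2.2]⟩, h1, h2⟩
    rw [heq, card_two hyz hst, hp.1.2, hp.2.2, two_mul]
  rw [Finset.sum_congr rfl key, Finset.sum_const, smul_eq_mul, Finset.card_sigma]
  have hcard : ∀ s ∈ univ.powersetCard (α := Fin n) k,
      (sᶜ.powersetCard k).card = (n - k).choose k := by
    intro s hs
    rw [Finset.mem_powersetCard] at hs
    rw [Finset.card_powersetCard, Finset.card_compl, Fintype.card_fin, hs.2]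
  rw [Finset.sum_congr rfl hcard, Finset.sum_const, smul_eq_mul,
    Finset.card_powersetCard, Finset.card_univ, Fintype.card_fin]

/-- For `2k ≤ n ≤ M`, `M ≥ 2`, a set `𝓜` with `M` elements and a subset `𝓝 ⊆ 𝓜` with `n`
elements, the sum over all `n`-tuples `x` with components in `𝓜` of `m_k(x)²` (where `m_k(x)`
is the number of elements of `𝓝` represented exactly `k` times in `x`) equals
`n(n-1) C(n,k) C(n-k,k) (M-2)^(n-2k) + n C(n,k) (M-1)^(n-k)`. -/
theorem sum_mk_sq_eq (M n k : ℕ) (hk : 2 * k ≤ n) (hnM : n ≤ M) (hM : 2 ≤ M)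
    (𝓝 : Finset (Fin M)) (h𝓝 : 𝓝.card = n) :
    (∑ x : Fin n → Fin M,
        ((𝓝.filter (fun y =>
          (Finset.univ.filter (fun i : Fin n => x i = y)).card = k)).card) ^ 2)
      = n * (n - 1) * n.choose k * (n - k).choose k * (M - 2) ^ (n - 2 * k)
        + n * n.choose k * (M - 1) ^ (n - k) := by
  have step1 : ∀ x : Fin n → Fin M,
      ((𝓝.filter (fun y =>
        (univ.filter (fun i : Fin n => x i = y)).card = k)).card) ^ 2
      = ∑ y ∈ 𝓝, ∑ z ∈ 𝓝,
          if (univ.filter (fun i => x i = y)).card = k ∧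
             (univ.filter (fun i => x i = z)).card = k then 1 else 0 := by
    intro x
    rw [sq, Finset.card_filter, Finset.sum_mul_sum]
    refine Finset.sum_congr rfl fun y _ => Finset.sum_congr rfl fun z _ => ?_
    by_cases h1 : (univ.filter (fun i => x i = y)).card = k <;>
      by_cases h2 : (univ.filter (fun i => x i = z)).card = k <;>
      simp [h1, h2]
  calc (∑ x : Fin n → Fin M,
        ((𝓝.filter (fun y =>
          (univ.filter (fun i : Fin n => x i = y)).card = k)).card) ^ 2)
      = ∑ y ∈ 𝓝, ∑ z ∈ 𝓝, ∑ x : Fin n → Fin M,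
          (if (univ.filter (fun i => x i = y)).card = k ∧
              (univ.filter (fun i => x i = z)).card = k then 1 else 0) := by
        rw [Finset.sum_congr rfl fun x _ => step1 x, Finset.sum_comm]
        exact Finset.sum_congr rfl fun y _ => Finset.sum_comm
    _ = ∑ y ∈ 𝓝, ∑ z ∈ 𝓝,
          (univ.filter (fun x : Fin n → Fin M =>
            (univ.filter (fun i => x i = y)).card = k ∧
            (univ.filter (fun i => x i = z)).card = k)).card := by
        refine Finset.sum_congr rfl fun y _ => Finset.sum_congr rfl fun z _ => ?_
        rw [Finset.card_filter]
    _ = ∑ y ∈ 𝓝, (n.choose k * (M - 1) ^ (n - k)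
          + (n - 1) * (n.choose k * (n - k).choose k * (M - 2) ^ (n - 2 * k))) := by
        refine Finset.sum_congr rfl fun y hy => ?_
        rw [← Finset.add_sum_erase _ _ hy]
        congr 1
        · have : (univ.filter (fun x : Fin n → Fin M =>
              (univ.filter (fun i => x i = y)).card = k ∧
              (univ.filter (fun i => x i = y)).card = k))
              = univ.filter (fun x : Fin n → Fin M =>
                (univ.filter (fun i => x i = y)).card = k) := by
            apply Finset.filter_congr
            intro x _
            exact and_self_iff
          rw [this, lemA]
        · have hterm : ∀ z ∈ 𝓝.erase y,
              (univ.filter (fun x : Fin n → Fin M =>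
                (univ.filter (fun i => x i = y)).card = k ∧
                (univ.filter (fun i => x i = z)).card = k)).card
              = n.choose k * (n - k).choose k * (M - 2) ^ (n - 2 * k) := by
            intro z hz
            exact lemB (Ne.symm (Finset.mem_erase.mp hz).1)
          rw [Finset.sum_congr rfl hterm, Finset.sum_const, smul_eq_mul,
            Finset.card_erase_of_mem hy, h𝓝]
    _ = n * (n - 1) * n.choose k * (n - k).choose k * (M - 2) ^ (n - 2 * k)
        + n * n.choose k * (M - 1) ^ (n - k) := by
        rw [Finset.sum_const, smul_eq_mul, h𝓝]
        ring
end

section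
/- Let λ ∈ (0,1] be a real number and k ≥ 0 a fixed integer. Let (n_j) and (M_j) be sequences of positive integers with k ≤ n_j ≤ M_j for all j, both tending to infinity, such that n_j/M_j → λ as j → ∞, and for each j let 𝓝_j be a subset of size n_j of a set 𝓜_j of size M_j. Then the averages A(k;M_j,n_j) := (1/M_j^{n_j}) Σ_{x ∈ 𝓜_j^{n_j}} m_k(x)/n_j converge to (λ^k/k!)·e^{−λ} as j → ∞. -/
open Filter Finset

lemma count_lemma (n M k : ℕ) (y : Fin M) :
    (Finset.univ.filter (fun x : Fin n → Fin M =>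
      (Finset.univ.filter (fun i => x i = y)).card = k)).card
      = n.choose k * (M-1)^(n-k) := by
  classical
  have key : (Finset.univ.filter (fun x : Fin n → Fin M =>
      (Finset.univ.filter (fun i => x i = y)).card = k))
      = (Finset.powersetCard k (Finset.univ : Finset (Fin n))).biUnion
        (fun s => Fintype.piFinset (fun i => if i ∈ s then {y} else Finset.univ.erase y)) := by
    ext x
    simp only [mem_filter, mem_univ, true_and, mem_biUnion, mem_powersetCard,
      Fintype.mem_piFinset]
    constructor
    · intro hx
      refine ⟨Finset.univ.filter (fun i => x i = y), ⟨subset_univ _, hx⟩, fun i => ?_⟩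
      by_cases h : x i = y <;> simp [h]
    · rintro ⟨s, ⟨-, hs⟩, hx⟩
      have : Finset.univ.filter (fun i => x i = y) = s := by
        ext i
        have := hx i
        by_cases h : i ∈ s <;> simp [h] at this <;> simp [h, this]
      rw [this, hs]
  rw [key, Finset.card_biUnion]
  · have : ∀ s ∈ Finset.powersetCard k (Finset.univ : Finset (Fin n)),
        (Fintype.piFinset (fun i => if i ∈ s then ({y} : Finset (Fin M))
          else Finset.univ.erase y)).card = (M-1)^(n-k) := by
      intro s hs
      rw [mem_powersetCard] at hs
      rw [Fintype.card_piFinset]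
      have : ∀ i, (if i ∈ s then ({y} : Finset (Fin M)) else Finset.univ.erase y).card
          = if i ∈ s then 1 else M - 1 := by
        intro i
        by_cases h : i ∈ s <;> simp [h, Finset.card_erase_of_mem]
      simp_rw [this]
      rw [Finset.prod_ite, Finset.prod_const, Finset.prod_const, one_pow, one_mul]
      congr 1
      have : Finset.univ.filter (fun x => x ∉ s) = sᶜ := by ext i; simp
      rw [this, Finset.card_compl, Fintype.card_fin, hs.2]
    rw [Finset.sum_congr rfl this, Finset.sum_const, Finset.card_powersetCard, card_univ,
      Fintype.card_fin, smul_eq_mul]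
  · intro s hs t ht hst
    simp only [Function.onFun]
    rw [Finset.disjoint_left]
    intro x hx hx'
    rw [Fintype.mem_piFinset] at hx hx'
    apply hst
    ext i
    have h1 := hx i; have h2 := hx' i
    constructor <;> intro h
    · simp [h] at h1; by_contra h'; simp [h'] at h2; exact h2 h1
    · simp [h] at h2; by_contra h'; simp [h'] at h1; exact h1 h2

lemma total_sum (n M k : ℕ) (N : Finset (Fin M)) :
    ∑ x : Fin n → Fin M,
        (N.filter (fun y => (Finset.univ.filter (fun i : Fin n => x i = y)).card = k)).card
      = N.card * (n.choose k * (M-1)^(n-k)) := by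
  classical
  have expand : ∀ x : Fin n → Fin M,
      (N.filter (fun y => (Finset.univ.filter (fun i : Fin n => x i = y)).card = k)).card
      = ∑ y ∈ N, if (Finset.univ.filter (fun i : Fin n => x i = y)).card = k then 1 else 0 :=
    fun x => Finset.card_filter _ _
  rw [Finset.sum_congr rfl (fun x _ => expand x), Finset.sum_comm]
  have : ∀ y ∈ N, (∑ x : Fin n → Fin M,
      if (Finset.univ.filter (fun i : Fin n => x i = y)).card = k then 1 else 0)
      = n.choose k * (M-1)^(n-k) := by
    intro y _
    rw [← Finset.card_filter]
    exact count_lemma n M k y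
  rw [Finset.sum_congr rfl this, Finset.sum_const, smul_eq_mul]

/-- If `n_j/M_j → λ ∈ (0,1]` with `k ≤ n_j ≤ M_j` and both `n_j, M_j → ∞`, then the averages
`A(k;M_j,n_j) = (1/M_j^{n_j}) Σ_x m_k(x)/n_j` converge to `(λ^k/k!) e^{-λ}`. -/
theorem average_tendsto_poisson (lam : ℝ) (hlam0 : 0 < lam) (hlam1 : lam ≤ 1) (k : ℕ)
    (n M : ℕ → ℕ) (hnpos : ∀ j, 0 < n j) (hMpos : ∀ j, 0 < M j)
    (hk : ∀ j, k ≤ n j) (hnM : ∀ j, n j ≤ M j)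
    (hn : Tendsto n atTop atTop) (hM : Tendsto M atTop atTop)
    (hratio : Tendsto (fun j => (n j : ℝ) / (M j : ℝ)) atTop (nhds lam))
    (𝓝 : ∀ j, Finset (Fin (M j))) (h𝓝 : ∀ j, (𝓝 j).card = n j) :
    Tendsto (fun j =>
        (1 / (M j : ℝ) ^ (n j)) * ∑ x : Fin (n j) → Fin (M j),
          ((((𝓝 j).filter (fun y =>
              (Finset.univ.filter (fun i : Fin (n j) => x i = y)).card = k)).card : ℝ)
            / (n j : ℝ)))
      atTop (nhds (lam ^ k / (k.factorial : ℝ) * Real.exp (-lam))) := by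
  have hMR : ∀ j, (0:ℝ) < (M j : ℝ) := fun j => by exact_mod_cast hMpos j
  have hMat : Tendsto (fun j => (M j : ℝ)) atTop atTop :=
    tendsto_natCast_atTop_atTop.comp hM
  -- step 1 : identify the expression
  have hval : ∀ j, (1 / (M j : ℝ) ^ (n j)) * ∑ x : Fin (n j) → Fin (M j),
          ((((𝓝 j).filter (fun y =>
              (Finset.univ.filter (fun i : Fin (n j) => x i = y)).card = k)).card : ℝ)
            / (n j : ℝ))
      = (((n j).choose k : ℝ) / (M j : ℝ) ^ k) * (((M j : ℝ) - 1) / (M j : ℝ)) ^ (n j - k) := by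
    intro j
    have hsum := total_sum (n j) (M j) k (𝓝 j)
    have hnR : ((n j : ℝ)) ≠ 0 := by exact_mod_cast (hnpos j).ne'
    have hMne : ((M j : ℝ)) ≠ 0 := (hMR j).ne'
    have hcast : (∑ x : Fin (n j) → Fin (M j),
          ((((𝓝 j).filter (fun y =>
              (Finset.univ.filter (fun i : Fin (n j) => x i = y)).card = k)).card : ℝ)
            / (n j : ℝ)))
        = ((n j : ℝ) * (((n j).choose k : ℝ) * ((M j : ℝ) - 1) ^ (n j - k))) / (n j : ℝ) := by
      rw [← Finset.sum_div]
      congr 1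
      rw [← Nat.cast_sum, hsum, h𝓝 j]
      push_cast [Nat.cast_sub (hMpos j)]
      ring
    rw [hcast, mul_comm ((n j : ℝ)) _, mul_div_assoc, div_self hnR, mul_one]
    have hpow : (M j : ℝ) ^ (n j) = (M j : ℝ) ^ k * (M j : ℝ) ^ (n j - k) := by
      rw [← pow_add, Nat.add_sub_cancel' (hk j)]
    rw [div_pow, hpow]
    field_simp
  simp_rw [hval]
  -- limits
  have hconst_div : ∀ c : ℝ, Tendsto (fun j => c / (M j : ℝ)) atTop (nhds 0) :=
    fun c => tendsto_const_nhds.div_atTop hMat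
  -- limit of binomial part
  have hg : Tendsto (fun j => (((n j).choose k : ℝ) / (M j : ℝ) ^ k)) atTop
      (nhds (lam ^ k / (k.factorial : ℝ))) := by
    have heq : ∀ j, (((n j).choose k : ℝ) / (M j : ℝ) ^ k)
        = (∏ i ∈ Finset.range k, (((n j : ℝ) - i) / (M j : ℝ))) / (k.factorial : ℝ) := by
      intro j
      have hdf : (((n j).descFactorial k : ℝ)) = ∏ i ∈ Finset.range k, ((n j : ℝ) - i) := by
        rw [Nat.descFactorial_eq_prod_range, Nat.cast_prod]
        refine Finset.prod_congr rfl (fun i hi => ?_)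
        rw [Finset.mem_range] at hi
        exact_mod_cast Nat.cast_sub (le_of_lt (lt_of_lt_of_le hi (hk j)))
      have hchoose : ((n j).descFactorial k : ℝ) = (k.factorial : ℝ) * ((n j).choose k : ℝ) := by
        exact_mod_cast congrArg (Nat.cast : ℕ → ℝ) (Nat.descFactorial_eq_factorial_mul_choose (n j) k)
      rw [Finset.prod_div_distrib, Finset.prod_const, ← hdf, hchoose, Finset.card_range]
      have hMk : ((M j : ℝ)) ^ k ≠ 0 := pow_ne_zero _ (hMR j).ne'
      field_simp
    simp_rw [heq]
    have hprod : Tendsto (fun j => ∏ i ∈ Finset.range k, (((n j : ℝ) - i) / (M j : ℝ)))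
        atTop (nhds (lam ^ k)) := by
      have : Tendsto (fun j => ∏ i ∈ Finset.range k, (((n j : ℝ) - i) / (M j : ℝ)))
          atTop (nhds (∏ _i ∈ Finset.range k, lam)) := by
        refine tendsto_finset_prod _ (fun i _ => ?_)
        have : (fun j => ((n j : ℝ) - i) / (M j : ℝ))
            = fun j => (n j : ℝ) / (M j : ℝ) - (i : ℝ) / (M j : ℝ) := by
          funext j; rw [sub_div]
        rw [this]
        simpa using hratio.sub (hconst_div i)
      simpa using this
    exact hprod.div_const _
  -- limit of the power part
  have hh : Tendsto (fun j => (((M j : ℝ) - 1) / (M j : ℝ)) ^ (n j - k)) atTop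
      (nhds (Real.exp (-lam))) := by
    -- log(1-t)/t → -1 as t → 0
    have hderiv : HasDerivAt (fun t : ℝ => Real.log (1 - t)) (-1) 0 := by
      have h1 : HasDerivAt (fun t : ℝ => 1 - t) (-1) 0 := by
        simpa using (hasDerivAt_id (0:ℝ)).const_sub 1
      have h2 : HasDerivAt Real.log 1 ((fun t : ℝ => 1 - t) 0) := by
        simpa using Real.hasDerivAt_log (by norm_num : ((1:ℝ) - 0) ≠ 0)
      have h3 := h2.comp 0 h1
      rw [one_mul] at h3
      exact h3
    have hslope : Tendsto (fun t : ℝ => Real.log (1 - t) / t) (nhdsWithin 0 {(0:ℝ)}ᶜ)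
        (nhds (-1)) := by
      have := hasDerivAt_iff_tendsto_slope.mp hderiv
      refine this.congr' ?_
      filter_upwards [self_mem_nhdsWithin] with t ht
      simp [slope_def_field, div_eq_div_iff]
    have htM : Tendsto (fun j => 1 / (M j : ℝ)) atTop (nhdsWithin 0 {(0:ℝ)}ᶜ) := by
      refine tendsto_nhdsWithin_of_tendsto_nhds_of_eventually_within _ (hconst_div 1) ?_
      filter_upwards with j
      simp only [Set.mem_compl_iff, Set.mem_singleton_iff]
      exact one_div_ne_zero (hMR j).ne'
    have hMlog : Tendsto (fun j => (M j : ℝ) * Real.log (1 - 1 / (M j : ℝ))) atTop (nhds (-1)) := by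
      have := hslope.comp htM
      refine this.congr (fun j => ?_)
      simp only [Function.comp_apply, one_div]
      rw [div_eq_mul_inv, inv_inv, mul_comm]
    have hnk : Tendsto (fun j => ((n j - k : ℕ) : ℝ) / (M j : ℝ)) atTop (nhds lam) := by
      have heq : ∀ j, ((n j - k : ℕ) : ℝ) / (M j : ℝ)
          = (n j : ℝ) / (M j : ℝ) - (k : ℝ) / (M j : ℝ) := by
        intro j
        rw [Nat.cast_sub (hk j), sub_div]
      simp_rw [heq]
      simpa using hratio.sub (hconst_div k)
    have hexp : Tendsto (fun j => ((n j - k : ℕ) : ℝ) * Real.log (1 - 1 / (M j : ℝ)))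
        atTop (nhds (-lam)) := by
      have := hnk.mul hMlog
      have heq : ∀ j, ((n j - k : ℕ) : ℝ) / (M j : ℝ) * ((M j : ℝ) * Real.log (1 - 1 / (M j : ℝ)))
          = ((n j - k : ℕ) : ℝ) * Real.log (1 - 1 / (M j : ℝ)) := by
        intro j
        field_simp [(hMR j).ne']
      rw [show lam * -1 = -lam by ring] at this
      exact this.congr heq
    have hcomp := (Real.continuous_exp.tendsto _).comp hexp
    refine hcomp.congr' ?_
    have hMev : ∀ᶠ j in atTop, 2 ≤ M j := hM.eventually_ge_atTop 2
    filter_upwards [hMev] with j hj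
    have h2 : (2:ℝ) ≤ (M j : ℝ) := by exact_mod_cast hj
    have hbase : (0:ℝ) < 1 - 1 / (M j : ℝ) := by
      rw [sub_pos, div_lt_one (hMR j)]
      linarith
    simp only [Function.comp_apply]
    rw [Real.exp_nat_mul, Real.exp_log hbase]
    congr 1
    field_simp
  have := hg.mul hh
  simpa using this
end

section
/- Let λ ∈ (0,1] be a real number and k ≥ 0 a fixed integer. Let (n_j) and (M_j) be sequences of positive integers with k ≤ n_j ≤ M_j for all j, both tending to infinity, such that n_j/M_j → λ as j → ∞, and for each j let 𝓝_j be a subset of size n_j of a set 𝓜_j of size M_j. Then the second moments about the limiting mean, M₂(k;M_j,n_j) := (1/M_j^{n_j}) Σ_{x ∈ 𝓜_j^{n_j}} ( m_k(x)/n_j − (λ^k/k!)·e^{−λ} )², converge to 0 as j → ∞. -/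
open Finset

lemma aux_card_fiber1 {n M : ℕ} (y : Fin M) (S : Finset (Fin n)) :
    (Finset.univ.filter (fun x : Fin n → Fin M =>
      Finset.univ.filter (fun i => x i = y) = S)).card = (M - 1) ^ (n - S.card) := by
  classical
  rw [← Fintype.card_subtype]
  have e : {x : Fin n → Fin M // Finset.univ.filter (fun i => x i = y) = S} ≃
      ({i : Fin n // i ∉ S} → {z : Fin M // z ≠ y}) :=
    { toFun := fun x i => ⟨x.1 i.1, by
        intro h
        have hm : i.1 ∈ Finset.univ.filter (fun j => x.1 j = y) := by simp [h]
        rw [x.2] at hm; exact i.2 hm⟩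
      invFun := fun f => ⟨fun i => if h : i ∈ S then y else (f ⟨i, h⟩).1, by
        ext i
        simp only [Finset.mem_filter, Finset.mem_univ, true_and]
        split_ifs with h
        · simp [h]
        · simpa [h] using (f ⟨i, h⟩).2⟩
      left_inv := fun x => by
        ext i
        by_cases h : i ∈ S
        · simp only [dif_pos h]
          have hm : i ∈ Finset.univ.filter (fun i => x.1 i = y) := by rw [x.2]; exact h
          have := (Finset.mem_filter.mp hm).2
          exact congrArg Fin.val this.symm
        · simp [dif_neg h]
      right_inv := fun f => by
        funext i
        simp [i.2] }
  rw [Fintype.card_congr e, Fintype.card_fun]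
  congr 1
  · rw [Fintype.card_subtype_compl, Fintype.card_subtype_eq, Fintype.card_fin]
  · rw [Fintype.card_subtype_compl, Fintype.card_fin]
    congr 1
    exact Fintype.card_coe S

lemma aux_card_fiber2 {n M : ℕ} (y y' : Fin M) (hy : y ≠ y') (S T : Finset (Fin n))
    (hST : Disjoint S T) :
    (Finset.univ.filter (fun x : Fin n → Fin M =>
      Finset.univ.filter (fun i => x i = y) = S ∧
      Finset.univ.filter (fun i => x i = y') = T)).card
      = (M - 2) ^ (n - (S.card + T.card)) := by
  classical
  rw [← Fintype.card_subtype]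
  have e : {x : Fin n → Fin M // Finset.univ.filter (fun i => x i = y) = S ∧
      Finset.univ.filter (fun i => x i = y') = T} ≃
      ({i : Fin n // i ∉ S ∧ i ∉ T} → {z : Fin M // z ≠ y ∧ z ≠ y'}) :=
    { toFun := fun x i => ⟨x.1 i.1, by
        constructor
        · intro h
          have hm : i.1 ∈ Finset.univ.filter (fun j => x.1 j = y) := by simp [h]
          rw [x.2.1] at hm; exact i.2.1 hm
        · intro h
          have hm : i.1 ∈ Finset.univ.filter (fun j => x.1 j = y') := by simp [h]
          rw [x.2.2] at hm; exact i.2.2 hm⟩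
      invFun := fun f => ⟨fun i =>
          if h : i ∈ S then y else if h' : i ∈ T then y' else (f ⟨i, h, h'⟩).1, by
        constructor
        · ext i
          simp only [Finset.mem_filter, Finset.mem_univ, true_and]
          split_ifs with h h'
          · simp [h]
          · simp [h, hy.symm]
          · simpa [h, h'] using (f ⟨i, h, h'⟩).2.1
        · ext i
          simp only [Finset.mem_filter, Finset.mem_univ, true_and]
          split_ifs with h h'
          · constructor
            · intro hyy'; exact absurd hyy' hy
            · intro hiT; exact absurd hiT (Finset.disjoint_left.mp hST h)
          · simp [h']
          · simpa [h, h'] using (f ⟨i, h, h'⟩).2.2⟩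
      left_inv := fun x => by
        ext i
        by_cases h : i ∈ S
        · simp only [dif_pos h]
          have hm : i ∈ Finset.univ.filter (fun i => x.1 i = y) := by rw [x.2.1]; exact h
          exact congrArg Fin.val (Finset.mem_filter.mp hm).2.symm
        · by_cases h' : i ∈ T
          · simp only [dif_neg h, dif_pos h']
            have hm : i ∈ Finset.univ.filter (fun i => x.1 i = y') := by rw [x.2.2]; exact h'
            exact congrArg Fin.val (Finset.mem_filter.mp hm).2.symm
          · simp [dif_neg h, dif_neg h']
      right_inv := fun f => by
        funext i
        simp [i.2.1, i.2.2] }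
  rw [Fintype.card_congr e, Fintype.card_fun]
  congr 1
  · have : (Finset.univ.filter (fun z : Fin M => z ≠ y ∧ z ≠ y')) = Finset.univ \ {y, y'} := by
      ext z; simp [not_or]
    rw [Fintype.card_subtype, this, Finset.card_sdiff_of_subset (Finset.subset_univ _), Finset.card_univ,
      Fintype.card_fin, Finset.card_insert_of_notMem (by simpa using hy), Finset.card_singleton]
  · have : (Finset.univ.filter (fun i : Fin n => i ∉ S ∧ i ∉ T)) = Finset.univ \ (S ∪ T) := by
      ext i; simp [not_or]
    rw [Fintype.card_subtype, this, Finset.card_sdiff_of_subset (Finset.subset_univ _), Finset.card_univ,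
      Fintype.card_fin, Finset.card_union_of_disjoint hST]

lemma count_single {n M k : ℕ} (y : Fin M) :
    (Finset.univ.filter (fun x : Fin n → Fin M =>
      (Finset.univ.filter (fun i => x i = y)).card = k)).card
      = n.choose k * (M - 1) ^ (n - k) := by
  classical
  have hdecomp : (Finset.univ.filter (fun x : Fin n → Fin M =>
      (Finset.univ.filter (fun i => x i = y)).card = k))
      = (Finset.univ.powersetCard k).biUnion (fun S =>
          Finset.univ.filter (fun x : Fin n → Fin M =>
            Finset.univ.filter (fun i => x i = y) = S)) := by
    ext x
    simp only [Finset.mem_filter, Finset.mem_univ, true_and, Finset.mem_biUnion,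
      Finset.mem_powersetCard]
    constructor
    · intro h; exact ⟨_, ⟨Finset.subset_univ _, h⟩, rfl⟩
    · rintro ⟨S, ⟨-, hc⟩, rfl⟩; exact hc
  rw [hdecomp, Finset.card_biUnion]
  · rw [Finset.sum_congr rfl (fun S hS => by
      rw [aux_card_fiber1 y S, (Finset.mem_powersetCard.mp hS).2])]
    rw [Finset.sum_const, Finset.card_powersetCard, Finset.card_univ, Fintype.card_fin,
      smul_eq_mul]
  · intro S hS S' hS' hne
    apply Finset.disjoint_left.mpr
    intro x hx hx'
    exact hne ((Finset.mem_filter.mp hx).2.symm.trans (Finset.mem_filter.mp hx').2)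

lemma count_pair {n M k : ℕ} (y y' : Fin M) (hy : y ≠ y') :
    (Finset.univ.filter (fun x : Fin n → Fin M =>
      (Finset.univ.filter (fun i => x i = y)).card = k ∧
      (Finset.univ.filter (fun i => x i = y')).card = k)).card
      = n.choose k * ((n - k).choose k * (M - 2) ^ (n - 2 * k)) := by
  classical
  have hdecomp : (Finset.univ.filter (fun x : Fin n → Fin M =>
      (Finset.univ.filter (fun i => x i = y)).card = k ∧
      (Finset.univ.filter (fun i => x i = y')).card = k))
      = (Finset.univ.powersetCard k).biUnion (fun S =>
          (Sᶜ.powersetCard k).biUnion (fun T =>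
            Finset.univ.filter (fun x : Fin n → Fin M =>
              Finset.univ.filter (fun i => x i = y) = S ∧
              Finset.univ.filter (fun i => x i = y') = T))) := by
    ext x
    simp only [Finset.mem_filter, Finset.mem_univ, true_and, Finset.mem_biUnion,
      Finset.mem_powersetCard]
    constructor
    · rintro ⟨h1, h2⟩
      refine ⟨_, ⟨Finset.subset_univ _, h1⟩, _, ⟨?_, h2⟩, rfl, rfl⟩
      intro i hi
      simp only [Finset.mem_filter, Finset.mem_univ, true_and] at hi
      simp only [Finset.mem_compl, Finset.mem_filter, Finset.mem_univ, true_and]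
      intro hiy
      exact hy (hiy.symm.trans hi)
    · rintro ⟨S, ⟨-, hS⟩, T, ⟨-, hT⟩, rfl, rfl⟩; exact ⟨hS, hT⟩
  rw [hdecomp, Finset.card_biUnion]
  · rw [Finset.sum_congr rfl (fun S hS => ?_), Finset.sum_const, Finset.card_powersetCard,
      Finset.card_univ, Fintype.card_fin, smul_eq_mul]
    rw [Finset.card_biUnion]
    · rw [Finset.sum_congr rfl (fun T hT => ?_), Finset.sum_const, Finset.card_powersetCard,
        Finset.card_compl, Fintype.card_fin, smul_eq_mul,
        (Finset.mem_powersetCard.mp hS).2]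
      obtain ⟨hTsub, hTcard⟩ := Finset.mem_powersetCard.mp hT
      rw [aux_card_fiber2 y y' hy S T
        (Finset.disjoint_left.mpr (fun a ha hat => (Finset.mem_compl.mp (hTsub hat)) ha)),
        (Finset.mem_powersetCard.mp hS).2, hTcard]
      congr 1
      omega
    · intro T hT T' hT' hne
      apply Finset.disjoint_left.mpr
      intro x hx hx'
      exact hne ((Finset.mem_filter.mp hx).2.2.symm.trans (Finset.mem_filter.mp hx').2.2)
  · intro S hS S' hS' hne
    apply Finset.disjoint_left.mpr
    intro x hx hx'
    simp only [Finset.mem_biUnion, Finset.mem_filter] at hx hx'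
    obtain ⟨T, -, -, h1, -⟩ := hx
    obtain ⟨T', -, -, h1', -⟩ := hx'
    exact hne (h1.symm.trans h1')

lemma sum_m {n M k : ℕ} (N : Finset (Fin M)) :
    ∑ x : Fin n → Fin M,
      (N.filter (fun y => (Finset.univ.filter (fun i => x i = y)).card = k)).card
    = N.card * (n.choose k * (M - 1) ^ (n - k)) := by
  classical
  have h1 : ∀ x : Fin n → Fin M,
      (N.filter (fun y => (Finset.univ.filter (fun i => x i = y)).card = k)).card
      = ∑ y ∈ N, if (Finset.univ.filter (fun i => x i = y)).card = k then 1 else 0 := by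
    intro x; rw [Finset.card_filter]
  rw [Finset.sum_congr rfl (fun x _ => h1 x), Finset.sum_comm]
  rw [Finset.sum_congr rfl (fun y _ => ?_), Finset.sum_const, smul_eq_mul]
  rw [← Finset.card_filter]
  exact count_single y

lemma sum_m_sq {n M k : ℕ} (N : Finset (Fin M)) :
    ∑ x : Fin n → Fin M,
      (N.filter (fun y => (Finset.univ.filter (fun i => x i = y)).card = k)).card ^ 2
    = N.card * (n.choose k * (M - 1) ^ (n - k))
      + N.card * (N.card - 1) * (n.choose k * ((n - k).choose k * (M - 2) ^ (n - 2 * k))) := by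
  classical
  set P : (Fin n → Fin M) → Fin M → Prop :=
    fun x y => (Finset.univ.filter (fun i => x i = y)).card = k with hP
  have h1 : ∀ x : Fin n → Fin M,
      (N.filter (fun y => P x y)).card ^ 2
      = ∑ y ∈ N, ∑ y' ∈ N, if P x y ∧ P x y' then 1 else 0 := by
    intro x
    rw [Finset.card_filter, sq, Finset.sum_mul_sum]
    refine Finset.sum_congr rfl (fun y _ => Finset.sum_congr rfl (fun y' _ => ?_))
    split_ifs <;> first | rfl | tauto
  rw [Finset.sum_congr rfl (fun x _ => h1 x), Finset.sum_comm]
  rw [Finset.sum_congr rfl (fun y _ => Finset.sum_comm)]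
  have h2 : ∀ y y' : Fin M, (∑ x : Fin n → Fin M, if P x y ∧ P x y' then 1 else 0)
      = (Finset.univ.filter (fun x : Fin n → Fin M => P x y ∧ P x y')).card := by
    intro y y'; rw [Finset.card_filter]
  rw [Finset.sum_congr rfl (fun y _ => Finset.sum_congr rfl (fun y' _ => h2 y y'))]
  have h3 : ∀ y ∈ N, (∑ y' ∈ N,
      (Finset.univ.filter (fun x : Fin n → Fin M => P x y ∧ P x y')).card)
      = n.choose k * (M - 1) ^ (n - k)
        + (N.card - 1) * (n.choose k * ((n - k).choose k * (M - 2) ^ (n - 2 * k))) := by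
    intro y hy
    rw [← Finset.add_sum_erase _ _ hy]
    congr 1
    · simp only [and_self]
      exact count_single y
    · rw [Finset.sum_congr rfl (fun y' hy' => count_pair y y' (Finset.mem_erase.mp hy').1.symm),
        Finset.sum_const, smul_eq_mul, Finset.card_erase_of_mem hy]
  rw [Finset.sum_congr rfl h3, Finset.sum_const, smul_eq_mul]
  ring

open Filter

lemma aux_exp (lam c : ℝ) (M m : ℕ → ℕ) (hM : Tendsto M atTop atTop)
    (h : Tendsto (fun j => (m j : ℝ) / (M j : ℝ)) atTop (nhds lam)) :
    Tendsto (fun j => (1 - c / (M j : ℝ)) ^ (m j)) atTop (nhds (Real.exp (lam * -c))) := by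
  have hMr : Tendsto (fun j => (M j : ℝ)) atTop atTop :=
    tendsto_natCast_atTop_atTop.comp hM
  have h1 : Tendsto (fun j => (1 + (-c) / (M j : ℝ)) ^ (M j)) atTop (nhds (Real.exp (-c))) :=
    (Real.tendsto_one_add_div_pow_exp (-c)).comp hM
  have h2 : Tendsto (fun j => Real.log ((1 + (-c) / (M j : ℝ)) ^ (M j))) atTop (nhds (-c)) := by
    have := (Real.continuousAt_log (Real.exp_ne_zero (-c))).tendsto.comp h1
    rwa [Real.log_exp] at this
  have h3 : Tendsto (fun j => (M j : ℝ) * Real.log (1 + (-c) / (M j : ℝ))) atTop (nhds (-c)) := by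
    simpa [Real.log_pow] using h2
  have h4 : Tendsto (fun j => (m j : ℝ) * Real.log (1 + (-c) / (M j : ℝ))) atTop
      (nhds (lam * (-c))) := by
    apply (h.mul h3).congr'
    filter_upwards [hMr.eventually_gt_atTop 0] with j hj
    field_simp
  have h5 : Tendsto (fun j => Real.exp ((m j : ℝ) * Real.log (1 + (-c) / (M j : ℝ)))) atTop
      (nhds (Real.exp (lam * -c))) := (Real.continuous_exp.tendsto _).comp h4
  apply h5.congr'
  filter_upwards [hMr.eventually_gt_atTop c, hMr.eventually_gt_atTop 0] with j hj hj0
  have hpos : 0 < 1 + (-c) / (M j : ℝ) := by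
    have h1 : c / (M j : ℝ) < 1 := (div_lt_one hj0).mpr hj
    rw [neg_div]
    linarith
  rw [Real.exp_nat_mul, Real.exp_log hpos]
  congr 1
  ring

lemma aux_poly (lam : ℝ) (k : ℕ) (n M : ℕ → ℕ) (hM : Tendsto M atTop atTop)
    (hn : Tendsto n atTop atTop)
    (h : Tendsto (fun j => (n j : ℝ) / (M j : ℝ)) atTop (nhds lam)) :
    Tendsto (fun j => ((n j).descFactorial k : ℝ) / (M j : ℝ) ^ k) atTop (nhds (lam ^ k)) := by
  have hMr : Tendsto (fun j => (M j : ℝ)) atTop atTop :=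
    tendsto_natCast_atTop_atTop.comp hM
  have hprod : Tendsto (fun j => ∏ i ∈ Finset.range k, (((n j : ℝ) - i) / (M j : ℝ))) atTop
      (nhds (∏ _i ∈ Finset.range k, lam)) := by
    apply tendsto_finset_prod
    intro i _
    have hi0 : Tendsto (fun j => (i : ℝ) / (M j : ℝ)) atTop (nhds 0) :=
      tendsto_const_nhds.div_atTop hMr
    have := h.sub hi0
    simpa [sub_div] using this
  rw [Finset.prod_const, Finset.card_range] at hprod
  apply hprod.congr'
  filter_upwards [hn.eventually_ge_atTop k] with j hj
  rw [Nat.descFactorial_eq_prod_range]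
  push_cast
  rw [Finset.prod_div_distrib, Finset.prod_const, Finset.card_range]
  congr 1
  apply Finset.prod_congr rfl
  intro i hi
  rw [Nat.cast_sub (le_trans (le_of_lt (Finset.mem_range.mp hi)) hj)]

/-- If `n_j/M_j → λ ∈ (0,1]` with `k ≤ n_j ≤ M_j` and both `n_j, M_j → ∞`, then the second
moments about the limiting mean,
`M₂(k;M_j,n_j) = (1/M_j^{n_j}) Σ_x (m_k(x)/n_j − (λ^k/k!) e^{−λ})²`, converge to `0`. -/
theorem second_moment_tendsto_zero (lam : ℝ) (hlam0 : 0 < lam) (hlam1 : lam ≤ 1) (k : ℕ)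
    (n M : ℕ → ℕ) (hnpos : ∀ j, 0 < n j) (hMpos : ∀ j, 0 < M j)
    (hk : ∀ j, k ≤ n j) (hnM : ∀ j, n j ≤ M j)
    (hn : Tendsto n atTop atTop) (hM : Tendsto M atTop atTop)
    (hratio : Tendsto (fun j => (n j : ℝ) / (M j : ℝ)) atTop (nhds lam))
    (𝓝 : ∀ j, Finset (Fin (M j))) (h𝓝 : ∀ j, (𝓝 j).card = n j) :
    Tendsto (fun j =>
        (1 / (M j : ℝ) ^ (n j)) * ∑ x : Fin (n j) → Fin (M j),
          (((((𝓝 j).filter (fun y =>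
              (Finset.univ.filter (fun i : Fin (n j) => x i = y)).card = k)).card : ℝ)
            / (n j : ℝ)) - lam ^ k / (k.factorial : ℝ) * Real.exp (-lam)) ^ 2)
      atTop (nhds 0) := by
  classical
  set c : ℝ := lam ^ k / (k.factorial : ℝ) * Real.exp (-lam) with hc
  set S1 : ℕ → ℕ := fun j => (n j).choose k * (M j - 1) ^ (n j - k) with hS1
  set S2 : ℕ → ℕ := fun j => (n j).choose k * ((n j - k).choose k * (M j - 2) ^ (n j - 2 * k))
    with hS2
  set P : ℕ → ℝ := fun j => (S1 j : ℝ) / (M j : ℝ) ^ (n j) with hPdef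
  set Q : ℕ → ℝ := fun j => (S2 j : ℝ) / (M j : ℝ) ^ (n j) with hQdef
  have hnr : Tendsto (fun j => (n j : ℝ)) atTop atTop := tendsto_natCast_atTop_atTop.comp hn
  have hMr : Tendsto (fun j => (M j : ℝ)) atTop atTop := tendsto_natCast_atTop_atTop.comp hM
  have hratio_sub : ∀ d : ℕ, Tendsto (fun j => ((n j - d : ℕ) : ℝ) / (M j : ℝ)) atTop
      (nhds lam) := by
    intro d
    have hd0 : Tendsto (fun j => (d : ℝ) / (M j : ℝ)) atTop (nhds 0) :=
      tendsto_const_nhds.div_atTop hMr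
    have h2 := hratio.sub hd0
    rw [sub_zero] at h2
    apply h2.congr'
    filter_upwards [hn.eventually_ge_atTop d] with j hj
    rw [Nat.cast_sub hj, sub_div]
  have hn_sub : ∀ d : ℕ, Tendsto (fun j => n j - d) atTop atTop := by
    intro d
    rw [tendsto_atTop_atTop]
    intro b
    obtain ⟨N0, hN0⟩ := (tendsto_atTop_atTop.mp hn) (b + d)
    exact ⟨N0, fun j hj => by have := hN0 j hj; omega⟩
  have hkf : ((k.factorial : ℝ)) ≠ 0 := by positivity
  -- limit of P
  have hP : Tendsto P atTop (nhds c) := by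
    have hpoly := aux_poly lam k n M hM hn hratio
    have hexp := aux_exp lam 1 M (fun j => n j - k) hM (hratio_sub k)
    have hmul := (hpoly.mul (tendsto_const_nhds (x := 1 / (k.factorial : ℝ)))).mul hexp
    have hlim : lam ^ k * (1 / (k.factorial : ℝ)) * Real.exp (lam * -1) = c := by
      rw [hc]; ring_nf
    rw [hlim] at hmul
    apply hmul.congr'
    filter_upwards [hM.eventually_ge_atTop 1] with j hj1
    have hMj : (0:ℝ) < (M j : ℝ) := by exact_mod_cast hMpos j
    have hMn : (M j : ℝ) ^ (n j) = (M j : ℝ) ^ k * (M j : ℝ) ^ (n j - k) := by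
      rw [← pow_add]; congr 1; have := hk j; omega
    have hcast : (S1 j : ℝ) = ((n j).descFactorial k : ℝ) / (k.factorial : ℝ)
        * ((M j : ℝ) - 1) ^ (n j - k) := by
      rw [hS1]
      have hd : ((n j).descFactorial k : ℝ) = (k.factorial : ℝ) * ((n j).choose k : ℝ) := by
        exact_mod_cast congrArg (Nat.cast (R := ℝ)) (Nat.descFactorial_eq_factorial_mul_choose (n j) k)
      push_cast [Nat.cast_sub hj1]
      rw [hd]
      field_simp
    have h1M : 1 - 1 / (M j : ℝ) = ((M j : ℝ) - 1) / (M j : ℝ) := by field_simp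
    show _ = P j
    rw [hPdef]
    simp only
    rw [hcast, hMn, h1M, div_pow]
    have hMk : ((M j : ℝ)) ^ k ≠ 0 := by positivity
    have hMnk : ((M j : ℝ)) ^ (n j - k) ≠ 0 := by positivity
    field_simp
    try ring_nf
    try exact Or.inl trivial
  -- limit of Q
  have hQ : Tendsto Q atTop (nhds (c ^ 2)) := by
    have hpoly1 := aux_poly lam k n M hM hn hratio
    have hpoly2 := aux_poly lam k (fun j => n j - k) M hM (hn_sub k) (hratio_sub k)
    have hexp := aux_exp lam 2 M (fun j => n j - 2 * k) hM (hratio_sub (2 * k))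
    have hmul := ((hpoly1.mul (tendsto_const_nhds (x := 1 / (k.factorial : ℝ)))).mul
      ((hpoly2.mul (tendsto_const_nhds (x := 1 / (k.factorial : ℝ)))))).mul hexp
    have hlim : lam ^ k * (1 / (k.factorial : ℝ)) * (lam ^ k * (1 / (k.factorial : ℝ)))
        * Real.exp (lam * -2) = c ^ 2 := by
      rw [hc]
      have he : Real.exp (lam * -2) = Real.exp (-lam) * Real.exp (-lam) := by
        rw [← Real.exp_add]; congr 1; ring
      rw [he]; ring
    rw [hlim] at hmul
    apply hmul.congr'
    filter_upwards [hM.eventually_ge_atTop 2, hn.eventually_ge_atTop (2 * k)] with j hj2 hjn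
    have hMj : (0:ℝ) < (M j : ℝ) := by exact_mod_cast hMpos j
    have hMn : (M j : ℝ) ^ (n j) = (M j : ℝ) ^ k * (M j : ℝ) ^ k * (M j : ℝ) ^ (n j - 2 * k) := by
      rw [← pow_add, ← pow_add]; congr 1; omega
    have hcast : (S2 j : ℝ) = ((n j).descFactorial k : ℝ) / (k.factorial : ℝ)
        * (((n j - k).descFactorial k : ℝ) / (k.factorial : ℝ))
        * ((M j : ℝ) - 2) ^ (n j - 2 * k) := by
      rw [hS2]
      have hd1 : ((n j).descFactorial k : ℝ) = (k.factorial : ℝ) * ((n j).choose k : ℝ) := by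
        exact_mod_cast congrArg (Nat.cast (R := ℝ)) (Nat.descFactorial_eq_factorial_mul_choose (n j) k)
      have hd2 : ((n j - k).descFactorial k : ℝ) = (k.factorial : ℝ) * ((n j - k).choose k : ℝ) := by
        exact_mod_cast congrArg (Nat.cast (R := ℝ)) (Nat.descFactorial_eq_factorial_mul_choose (n j - k) k)
      push_cast [Nat.cast_sub hj2]
      rw [hd1, hd2]
      field_simp
    have h2M : 1 - 2 / (M j : ℝ) = ((M j : ℝ) - 2) / (M j : ℝ) := by field_simp
    show _ = Q j
    rw [hQdef]
    simp only
    rw [hcast, hMn, h2M, div_pow]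
    have hMk : ((M j : ℝ)) ^ k ≠ 0 := by positivity
    have hMnk : ((M j : ℝ)) ^ (n j - 2 * k) ≠ 0 := by positivity
    field_simp
    try ring_nf
    try exact Or.inl trivial
  -- limit of the combined expression
  have hinv : Tendsto (fun j => 1 / (n j : ℝ)) atTop (nhds 0) :=
    tendsto_const_nhds.div_atTop hnr
  have hg : Tendsto (fun j => P j * (1 / (n j : ℝ))
      + (1 - 1 / (n j : ℝ)) * Q j - 2 * c * P j + c ^ 2) atTop
      (nhds (c * 0 + (1 - 0) * c ^ 2 - 2 * c * c + c ^ 2)) := by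
    exact (((hP.mul hinv).add ((tendsto_const_nhds.sub hinv).mul hQ)).sub
      ((tendsto_const_nhds (x := 2 * c)).mul hP)).add tendsto_const_nhds
  have hzero : c * 0 + (1 - 0) * c ^ 2 - 2 * c * c + c ^ 2 = 0 := by ring
  rw [hzero] at hg
  apply hg.congr
  -- pointwise identity
  intro j
  beta_reduce
  symm
  have hnj : (0:ℝ) < (n j : ℝ) := by exact_mod_cast hnpos j
  have hMj : (0:ℝ) < (M j : ℝ) := by exact_mod_cast hMpos j
  have hMnpos : (0:ℝ) < (M j : ℝ) ^ (n j) := by positivity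
  set mf : (Fin (n j) → Fin (M j)) → ℕ := fun x => ((𝓝 j).filter (fun y =>
      (Finset.univ.filter (fun i : Fin (n j) => x i = y)).card = k)).card with hmf
  have hs1 : (∑ x : Fin (n j) → Fin (M j), mf x) = n j * S1 j := by
    rw [hmf, hS1]
    simp only
    rw [sum_m, h𝓝]
  have hs2 : (∑ x : Fin (n j) → Fin (M j), (mf x) ^ 2)
      = n j * S1 j + n j * (n j - 1) * S2 j := by
    rw [hmf, hS1, hS2]
    simp only
    rw [sum_m_sq, h𝓝]
  have hcardfun : (Finset.univ : Finset (Fin (n j) → Fin (M j))).card = M j ^ n j := by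
    rw [Finset.card_univ, Fintype.card_fun, Fintype.card_fin, Fintype.card_fin]
  have expand : ∑ x : Fin (n j) → Fin (M j), ((mf x : ℝ) / (n j : ℝ) - c) ^ 2
      = ((∑ x : Fin (n j) → Fin (M j), (mf x) ^ 2 : ℕ) : ℝ) / (n j : ℝ) ^ 2
        - 2 * c * (((∑ x : Fin (n j) → Fin (M j), mf x : ℕ) : ℝ) / (n j : ℝ))
        + (M j : ℝ) ^ (n j) * c ^ 2 := by
    have e1 : ∀ x : Fin (n j) → Fin (M j), ((mf x : ℝ) / (n j : ℝ) - c) ^ 2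
        = ((mf x : ℝ) ^ 2) / (n j : ℝ) ^ 2 - 2 * c * (mf x : ℝ) / (n j : ℝ) + c ^ 2 := by
      intro x; ring
    rw [Finset.sum_congr rfl (fun x _ => e1 x), Finset.sum_add_distrib,
      Finset.sum_sub_distrib, ← Finset.sum_div, ← Finset.sum_div, ← Finset.mul_sum,
      Finset.sum_const, hcardfun, nsmul_eq_mul]
    push_cast
    ring
  calc (1 / (M j : ℝ) ^ (n j)) * ∑ x : Fin (n j) → Fin (M j),
        ((mf x : ℝ) / (n j : ℝ) - c) ^ 2
      = (1 / (M j : ℝ) ^ (n j)) *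
        (((n j : ℝ) * (S1 j : ℝ) + (n j : ℝ) * ((n j : ℝ) - 1) * (S2 j : ℝ)) / (n j : ℝ) ^ 2
          - 2 * c * (((n j : ℝ) * (S1 j : ℝ)) / (n j : ℝ))
          + (M j : ℝ) ^ (n j) * c ^ 2) := by
        rw [expand, hs1, hs2]
        push_cast [Nat.cast_sub (hnpos j)]
        ring_nf
    _ = P j * (1 / (n j : ℝ)) + (1 - 1 / (n j : ℝ)) * Q j - 2 * c * P j + c ^ 2 := by
        rw [hPdef, hQdef]
        simp only
        field_simp
end

section
/- For every real c > 0 there exist a constant C > 0 and a threshold N such that the following holds uniformly: for every real λ ∈ (0,1], every real γ ∈ [0,1), every a ∈ {1,2}, and all integers k, n, M with k ≤ n ≤ M, n ≥ N, M ≥ 3, and |M − n/λ| ≤ c·n^γ, one has |(1 − a/M)^(n−k) − e^{−aλ}| ≤ C · e^{−aλ} · (λ²·n^{γ−1} + λ·k·n^{−1}). -/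
/-- `|e^t - 1| ≤ |t| e^{|t|}` for all real `t`. -/
lemma aux_abs_exp_sub_one (t : ℝ) : |Real.exp t - 1| ≤ |t| * Real.exp |t| := by
  rcases le_or_gt 0 t with h | h
  · rw [abs_of_nonneg h, abs_of_nonneg (by linarith [Real.one_le_exp h])]
    have h1 : (-t) + 1 ≤ Real.exp (-t) := Real.add_one_le_exp (-t)
    have h2 : Real.exp (-t) * Real.exp t = 1 := by
      rw [← Real.exp_add]; simp
    nlinarith [Real.exp_pos t]
  · rw [abs_of_neg h, abs_of_nonpos (by linarith [Real.exp_lt_one_iff.2 h])]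
    have h1 : t + 1 ≤ Real.exp t := Real.add_one_le_exp t
    have h2 : 1 ≤ Real.exp (-t) := Real.one_le_exp (by linarith)
    nlinarith

/-- Quantitative bound on the logarithm: `|log(1-x) + x| ≤ 3 x²` for `0 ≤ x ≤ 2/3`. -/
lemma aux_abs_log (x : ℝ) (h0 : 0 ≤ x) (h1 : x ≤ 2/3) :
    |Real.log (1 - x) + x| ≤ 3 * x ^ 2 := by
  have hx1 : |x| < 1 := by rw [abs_of_nonneg h0]; linarith
  have h := Real.abs_log_sub_add_sum_range_le hx1 1
  rw [Finset.sum_range_one, abs_of_nonneg h0] at h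
  norm_num at h
  have hden : (1:ℝ)/3 ≤ 1 - x := by linarith
  have : x ^ 2 / (1 - x) ≤ 3 * x ^ 2 := by
    rw [div_le_iff₀ (by linarith)]
    nlinarith
  calc |Real.log (1 - x) + x| = |x + Real.log (1 - x)| := by rw [add_comm]
    _ ≤ x ^ 2 / (1 - x) := h
    _ ≤ 3 * x ^ 2 := this

set_option maxHeartbeats 1000000 in
/-- Uniform exponential asymptotic: for every `c > 0` there are `C > 0` and a threshold `N`
such that for all `λ ∈ (0,1]`, `γ ∈ [0,1)`, `a ∈ {1,2}`, and integers `k ≤ n ≤ M` with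
`n ≥ N`, `M ≥ 3` and `|M − n/λ| ≤ c n^γ`, one has
`|(1 − a/M)^(n−k) − e^{−aλ}| ≤ C e^{−aλ} (λ² n^{γ−1} + λ k n^{−1})`. -/
theorem uniform_exp_estimate :
    ∀ c : ℝ, 0 < c → ∃ C : ℝ, 0 < C ∧ ∃ N : ℕ,
      ∀ lam γ : ℝ, 0 < lam → lam ≤ 1 → 0 ≤ γ → γ < 1 →
      ∀ a : ℕ, (a = 1 ∨ a = 2) →
      ∀ k n M : ℕ, k ≤ n → n ≤ M → N ≤ n → 3 ≤ M →
      |(M : ℝ) - (n : ℝ) / lam| ≤ c * (n : ℝ) ^ γ →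
      |(1 - (a : ℝ) / (M : ℝ)) ^ (n - k) - Real.exp (-((a : ℝ) * lam))| ≤
        C * Real.exp (-((a : ℝ) * lam))
          * (lam ^ 2 * (n : ℝ) ^ (γ - 1) + lam * (k : ℝ) / (n : ℝ)) := by
  intro c hc
  set C₁ : ℝ := max 2 (2 * c) with hC₁def
  have hC₁two : (2:ℝ) ≤ C₁ := le_max_left _ _
  have hC₁c : 2 * c ≤ C₁ := le_max_right _ _
  have hC₁pos : 0 < C₁ := lt_of_lt_of_le two_pos hC₁two
  set C₂ : ℝ := 2 * c * C₁ + 2 * C₁ + 12 * C₁ ^ 2 with hC₂def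
  have hC₂pos : 0 < C₂ := by positivity
  clear_value C₁ C₂
  refine ⟨C₂ * Real.exp (2 * C₂), mul_pos hC₂pos (Real.exp_pos _), 1, ?_⟩
  intro lam γ hlam hlam1 hγ0 hγ1 a ha k n M hkn hnM hNn hM3 hMn
  -- basic positivity facts
  have hn1 : (1:ℝ) ≤ (n:ℝ) := by exact_mod_cast hNn
  have hn0 : (0:ℝ) < (n:ℝ) := by linarith
  have hM3' : (3:ℝ) ≤ (M:ℝ) := by exact_mod_cast hM3
  have hM0 : (0:ℝ) < (M:ℝ) := by linarith
  have hnM' : (n:ℝ) ≤ (M:ℝ) := by exact_mod_cast hnM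
  have hkn' : (k:ℝ) ≤ (n:ℝ) := by exact_mod_cast hkn
  have hk0 : (0:ℝ) ≤ (k:ℝ) := Nat.cast_nonneg k
  have hA1 : (1:ℝ) ≤ (a:ℝ) := by rcases ha with h | h <;> simp [h]
  have hA2 : (a:ℝ) ≤ 2 := by rcases ha with h | h <;> simp [h] <;> norm_num
  have hnγpos : (0:ℝ) < (n:ℝ) ^ γ := Real.rpow_pos_of_pos hn0 γ
  -- lower bound on M
  have hMlb : (n:ℝ) / lam - c * (n:ℝ) ^ γ ≤ (M:ℝ) := by
    have := (abs_le.1 hMn).1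
    linarith
  -- key: n / M ≤ C₁ * lam
  have hkey : (n:ℝ) / (M:ℝ) ≤ C₁ * lam := by
    by_cases hcase : c * (n:ℝ) ^ γ ≤ (n:ℝ) / (2 * lam)
    · have hhalf : (n:ℝ) / (2 * lam) ≤ (M:ℝ) := by
        have h2 : (n:ℝ) / lam - (n:ℝ) / (2 * lam) = (n:ℝ) / (2 * lam) := by
          field_simp; ring
        linarith
      have : (n:ℝ) / (M:ℝ) ≤ 2 * lam := by
        rw [div_le_iff₀ hM0]
        have hpos : (0:ℝ) < 2 * lam := by linarith
        calc (n:ℝ) = (2 * lam) * ((n:ℝ) / (2 * lam)) := by field_simp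
          _ ≤ (2 * lam) * (M:ℝ) := by
              apply mul_le_mul_of_nonneg_left hhalf (le_of_lt hpos)
          _ = 2 * lam * (M:ℝ) := by ring
      calc (n:ℝ) / (M:ℝ) ≤ 2 * lam := this
        _ ≤ C₁ * lam := mul_le_mul_of_nonneg_right hC₁two hlam.le
    · push_neg at hcase
      -- then 1 ≤ n^{1-γ} < 2 c lam, so n/M ≤ 1 ≤ 2 c lam ≤ C₁ lam
      have hnγn : (n:ℝ) ^ γ ≤ (n:ℝ) := by
        calc (n:ℝ) ^ γ ≤ (n:ℝ) ^ (1:ℝ) :=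
              Real.rpow_le_rpow_of_exponent_le hn1 (le_of_lt hγ1)
          _ = (n:ℝ) := Real.rpow_one _
      have h1' : (n:ℝ) < 2 * lam * (c * (n:ℝ) ^ γ) := by
        rw [div_lt_iff₀ (by linarith : (0:ℝ) < 2 * lam)] at hcase
        linarith [hcase]
      have hone : (1:ℝ) ≤ 2 * c * lam := by
        have hrat : (n:ℝ) / (n:ℝ) ^ γ < 2 * c * lam := by
          rw [div_lt_iff₀ hnγpos]; linarith only [h1']
        have hge1 : (1:ℝ) ≤ (n:ℝ) / (n:ℝ) ^ γ := by
          rw [le_div_iff₀ hnγpos]; linarith only [hnγn]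
        linarith
      have : (n:ℝ) / (M:ℝ) ≤ 1 := by
        rw [div_le_one hM0]; exact hnM'
      calc (n:ℝ) / (M:ℝ) ≤ 1 := this
        _ ≤ 2 * c * lam := hone
        _ ≤ C₁ * lam := by
            have := mul_le_mul_of_nonneg_right hC₁c hlam.le
            linarith only [this]
  have hinvM : (1:ℝ) / (M:ℝ) ≤ C₁ * lam / (n:ℝ) := by
    rw [div_le_div_iff₀ hM0 hn0]
    calc 1 * (n:ℝ) = ((n:ℝ) / (M:ℝ)) * (M:ℝ) := by field_simp
      _ ≤ (C₁ * lam) * (M:ℝ) := by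
          apply mul_le_mul_of_nonneg_right hkey (le_of_lt hM0)
  -- the quantity x = a / M
  set x : ℝ := (a:ℝ) / (M:ℝ) with hxdef
  clear_value x
  have hx0 : 0 ≤ x := by rw [hxdef]; positivity
  have hx23 : x ≤ 2/3 := by
    rw [hxdef, div_le_iff₀ hM0]; linarith
  have h1x : (0:ℝ) < 1 - x := by linarith
  -- log expansion
  set r : ℝ := Real.log (1 - x) + x with hrdef
  clear_value r
  have hr : |r| ≤ 3 * x ^ 2 := by rw [hrdef]; exact aux_abs_log x hx0 hx23
  -- m = n - k
  set m : ℕ := n - k with hmdef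
  clear_value m
  have hm : (m:ℝ) = (n:ℝ) - (k:ℝ) := by
    rw [hmdef, Nat.cast_sub hkn]
  have hm0 : (0:ℝ) ≤ (m:ℝ) := Nat.cast_nonneg m
  have hmn : (m:ℝ) ≤ (n:ℝ) := by rw [hm]; linarith
  -- the deviation D
  set D : ℝ := (m:ℝ) * Real.log (1 - x) + (a:ℝ) * lam with hDdef
  clear_value D
  set S : ℝ := lam ^ 2 * (n:ℝ) ^ (γ - 1) + lam * (k:ℝ) / (n:ℝ) with hSdef
  clear_value S
  have hnγ1 : (n:ℝ) ^ (γ - 1) = (n:ℝ) ^ γ / (n:ℝ) := by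
    rw [Real.rpow_sub hn0, Real.rpow_one]
  have hSnonneg : 0 ≤ S := by
    rw [hSdef]
    have : (0:ℝ) ≤ (n:ℝ) ^ (γ - 1) := le_of_lt (Real.rpow_pos_of_pos hn0 _)
    positivity
  -- bound each term of D
  have hD : |D| ≤ C₂ * S := by
    have hDeq : D = ((a:ℝ) * lam - (n:ℝ) * x) + (k:ℝ) * x + (m:ℝ) * r := by
      rw [hDdef, hrdef, hm]; ring
    -- term 1
    have ht1 : |(a:ℝ) * lam - (n:ℝ) * x| ≤ 2 * c * C₁ * (lam ^ 2 * (n:ℝ) ^ (γ - 1)) := by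
      have heq : (a:ℝ) * lam - (n:ℝ) * x = ((a:ℝ) * lam / (M:ℝ)) * ((M:ℝ) - (n:ℝ) / lam) := by
        rw [hxdef]; field_simp
      rw [heq, abs_mul]
      have h1 : |(a:ℝ) * lam / (M:ℝ)| = (a:ℝ) * lam / (M:ℝ) := abs_of_nonneg (by positivity)
      rw [h1]
      calc ((a:ℝ) * lam / (M:ℝ)) * |(M:ℝ) - (n:ℝ) / lam|
          ≤ ((a:ℝ) * lam / (M:ℝ)) * (c * (n:ℝ) ^ γ) := by
            apply mul_le_mul_of_nonneg_left hMn (by positivity)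
        _ = ((a:ℝ) * lam * (c * (n:ℝ) ^ γ)) * (1 / (M:ℝ)) := by ring
        _ ≤ ((a:ℝ) * lam * (c * (n:ℝ) ^ γ)) * (C₁ * lam / (n:ℝ)) := by
            apply mul_le_mul_of_nonneg_left hinvM (by positivity)
        _ = (a:ℝ) * c * C₁ * (lam ^ 2 * ((n:ℝ) ^ γ / (n:ℝ))) := by ring
        _ ≤ 2 * c * C₁ * (lam ^ 2 * ((n:ℝ) ^ γ / (n:ℝ))) := by
            apply mul_le_mul_of_nonneg_right _ (by positivity)
            have := mul_le_mul_of_nonneg_right hA2 (mul_nonneg hc.le hC₁pos.le)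
            linarith only [this]
        _ = 2 * c * C₁ * (lam ^ 2 * (n:ℝ) ^ (γ - 1)) := by rw [hnγ1]
    -- term 2
    have ht2 : (k:ℝ) * x ≤ 2 * C₁ * (lam * (k:ℝ) / (n:ℝ)) := by
      calc (k:ℝ) * x = (k:ℝ) * (a:ℝ) * (1 / (M:ℝ)) := by rw [hxdef]; ring
        _ ≤ (k:ℝ) * (a:ℝ) * (C₁ * lam / (n:ℝ)) := by
            apply mul_le_mul_of_nonneg_left hinvM (by positivity)
        _ = (a:ℝ) * C₁ * (lam * (k:ℝ) / (n:ℝ)) := by ring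
        _ ≤ 2 * C₁ * (lam * (k:ℝ) / (n:ℝ)) := by
            apply mul_le_mul_of_nonneg_right _ (by positivity)
            have := mul_le_mul_of_nonneg_right hA2 hC₁pos.le
            linarith only [this]
    -- term 3
    have hn1inv : ((n:ℝ))⁻¹ ≤ (n:ℝ) ^ (γ - 1) := by
      have : (n:ℝ) ^ (-1:ℝ) ≤ (n:ℝ) ^ (γ - 1) :=
        Real.rpow_le_rpow_of_exponent_le hn1 (by linarith)
      rwa [Real.rpow_neg_one] at this
    have hnx : (n:ℝ) * x ≤ 2 * (C₁ * lam) := by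
      have hxe : (n:ℝ) * x = (a:ℝ) * ((n:ℝ) / (M:ℝ)) := by rw [hxdef]; ring
      rw [hxe]
      have := mul_le_mul hA2 hkey (by positivity) (by norm_num : (0:ℝ) ≤ 2)
      linarith
    have ht3 : (m:ℝ) * |r| ≤ 12 * C₁ ^ 2 * (lam ^ 2 * (n:ℝ) ^ (γ - 1)) := by
      have hstep : (m:ℝ) * |r| ≤ (n:ℝ) * (3 * x ^ 2) :=
        mul_le_mul hmn hr (abs_nonneg _) hn0.le
      have h2 : (n:ℝ) * (3 * x ^ 2) ≤ 12 * C₁ ^ 2 * (lam ^ 2 * ((n:ℝ))⁻¹) := by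
        rw [show 12 * C₁ ^ 2 * (lam ^ 2 * ((n:ℝ))⁻¹) = (12 * C₁ ^ 2 * lam ^ 2) / (n:ℝ) by
          field_simp]
        rw [le_div_iff₀ hn0]
        have hnx0 : 0 ≤ (n:ℝ) * x := mul_nonneg hn0.le hx0
        have hsq : ((n:ℝ) * x) ^ 2 ≤ (2 * (C₁ * lam)) ^ 2 :=
          pow_le_pow_left₀ hnx0 hnx 2
        calc (n:ℝ) * (3 * x ^ 2) * (n:ℝ) = 3 * ((n:ℝ) * x) ^ 2 := by ring
          _ ≤ 3 * (2 * (C₁ * lam)) ^ 2 := by linarith only [hsq]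
          _ = 12 * C₁ ^ 2 * lam ^ 2 := by ring
      have h3 : lam ^ 2 * ((n:ℝ))⁻¹ ≤ lam ^ 2 * (n:ℝ) ^ (γ - 1) :=
        mul_le_mul_of_nonneg_left hn1inv (by positivity)
      have h4 : 12 * C₁ ^ 2 * (lam ^ 2 * ((n:ℝ))⁻¹) ≤ 12 * C₁ ^ 2 * (lam ^ 2 * (n:ℝ) ^ (γ - 1)) :=
        mul_le_mul_of_nonneg_left h3 (by positivity)
      linarith
    have hterm : |D| ≤ |(a:ℝ) * lam - (n:ℝ) * x| + (k:ℝ) * x + (m:ℝ) * |r| := by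
      rw [hDeq]
      calc |((a:ℝ) * lam - (n:ℝ) * x) + (k:ℝ) * x + (m:ℝ) * r|
          ≤ |((a:ℝ) * lam - (n:ℝ) * x) + (k:ℝ) * x| + |(m:ℝ) * r| := abs_add_le _ _
        _ ≤ |(a:ℝ) * lam - (n:ℝ) * x| + |(k:ℝ) * x| + |(m:ℝ) * r| := by
            linarith only [abs_add_le ((a:ℝ) * lam - (n:ℝ) * x) ((k:ℝ) * x)]
        _ = |(a:ℝ) * lam - (n:ℝ) * x| + (k:ℝ) * x + (m:ℝ) * |r| := by
            rw [abs_mul, abs_mul, abs_of_nonneg hk0, abs_of_nonneg hx0, abs_of_nonneg hm0]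
    have hfin : (2 * c * C₁ + 12 * C₁ ^ 2) * (lam ^ 2 * (n:ℝ) ^ (γ - 1))
        + 2 * C₁ * (lam * (k:ℝ) / (n:ℝ)) ≤ C₂ * S := by
      rw [hC₂def, hSdef]
      have h1 : (0:ℝ) ≤ lam ^ 2 * (n:ℝ) ^ (γ - 1) := by
        have := le_of_lt (Real.rpow_pos_of_pos hn0 (γ - 1)); positivity
      have h2 : (0:ℝ) ≤ lam * (k:ℝ) / (n:ℝ) := by positivity
      have e1 : 0 ≤ 2 * C₁ * (lam ^ 2 * (n:ℝ) ^ (γ - 1)) := mul_nonneg (by positivity) h1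
      have e2 : 0 ≤ (2 * c * C₁ + 12 * C₁ ^ 2) * (lam * (k:ℝ) / (n:ℝ)) :=
        mul_nonneg (by positivity) h2
      linarith only [e1, e2]
    linarith only [hterm, ht1, ht2, ht3, hfin]
  -- S is bounded by 2, hence |D| ≤ 2 C₂
  have hS2 : S ≤ 2 := by
    rw [hSdef]
    have h1 : (n:ℝ) ^ (γ - 1) ≤ 1 :=
      Real.rpow_le_one_of_one_le_of_nonpos hn1 (by linarith)
    have h2 : lam ^ 2 * (n:ℝ) ^ (γ - 1) ≤ 1 := by
      have hl2 : lam ^ 2 ≤ 1 := pow_le_one₀ hlam.le hlam1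
      have hpos : (0:ℝ) ≤ (n:ℝ) ^ (γ - 1) := le_of_lt (Real.rpow_pos_of_pos hn0 _)
      have := mul_le_mul hl2 h1 hpos (by norm_num : (0:ℝ) ≤ 1)
      linarith only [this]
    have h3 : lam * (k:ℝ) / (n:ℝ) ≤ 1 := by
      rw [div_le_one hn0]
      have := mul_le_mul_of_nonneg_right hlam1 hk0
      linarith only [this, hkn']
    linarith
  have hDb : |D| ≤ 2 * C₂ := by
    calc |D| ≤ C₂ * S := hD
      _ ≤ C₂ * 2 := mul_le_mul_of_nonneg_left hS2 hC₂pos.le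
      _ = 2 * C₂ := by ring
  -- rewrite the power as an exponential
  have hpow : (1 - x) ^ m = Real.exp (-((a:ℝ) * lam)) * Real.exp D := by
    rw [← Real.exp_add]
    have h : -((a:ℝ) * lam) + D = Real.log (1 - x) * (m:ℕ) := by rw [hDdef]; ring
    rw [h, Real.exp_mul, Real.exp_log h1x, Real.rpow_natCast]
  -- conclude
  have hexps : Real.exp |D| ≤ Real.exp (2 * C₂) := Real.exp_le_exp.2 hDb
  have hfinal : |(1 - x) ^ m - Real.exp (-((a:ℝ) * lam))|
      = Real.exp (-((a:ℝ) * lam)) * |Real.exp D - 1| := by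
    rw [hpow, show Real.exp (-((a:ℝ) * lam)) * Real.exp D - Real.exp (-((a:ℝ) * lam))
        = Real.exp (-((a:ℝ) * lam)) * (Real.exp D - 1) by ring,
      abs_mul, abs_of_pos (Real.exp_pos _)]
  rw [hfinal]
  have hEpos : (0:ℝ) < Real.exp (-((a:ℝ) * lam)) := Real.exp_pos _
  calc Real.exp (-((a:ℝ) * lam)) * |Real.exp D - 1|
      ≤ Real.exp (-((a:ℝ) * lam)) * (|D| * Real.exp |D|) := by
        apply mul_le_mul_of_nonneg_left (aux_abs_exp_sub_one D) (le_of_lt hEpos)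
    _ ≤ Real.exp (-((a:ℝ) * lam)) * ((C₂ * S) * Real.exp (2 * C₂)) := by
        apply mul_le_mul_of_nonneg_left _ (le_of_lt hEpos)
        apply mul_le_mul hD hexps (le_of_lt (Real.exp_pos _)) (by positivity)
    _ = C₂ * Real.exp (2 * C₂) * Real.exp (-((a:ℝ) * lam)) * S := by ring
end

section
/- Let p be a prime with p ≡ 3 (mod 4) and set m = (p+1)/2. Then m! ≡ m (mod p) or m! ≡ m − 1 (mod p). -/
/-- For a prime `p ≡ 3 (mod 4)` and `m = (p+1)/2`, one has `m! ≡ m (mod p)` or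
`m! ≡ m − 1 (mod p)`. -/
theorem median_almost_fixed_point (p : ℕ) (hp : p.Prime) (h4 : p % 4 = 3) :
    ((((p + 1) / 2).factorial : ZMod p) = (((p + 1) / 2 : ℕ) : ZMod p)) ∨
    ((((p + 1) / 2).factorial : ZMod p) = (((p + 1) / 2 : ℕ) : ZMod p) - 1) := by
  haveI : Fact p.Prime := ⟨hp⟩
  set n := (p - 1) / 2 with hn
  have hmn : (p + 1) / 2 = n + 1 := by omega
  have hnodd : Odd n := ⟨p / 4, by omega⟩
  have hkey : (n.factorial : ZMod p) * (n.factorial : ZMod p) = 1 := by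
    have h1 : n.factorial * (p - 1).descFactorial n = (p - 1).factorial := by
      have := Nat.factorial_mul_descFactorial (n := p - 1) (k := n) (by omega)
      rwa [show p - 1 - n = n by omega] at this
    have h2 : ((p - 1).descFactorial n : ZMod p) = (-1) ^ n * n.factorial :=
      ZMod.cast_descFactorial (by omega)
    have h3 : ((p - 1).factorial : ZMod p) = -1 := ZMod.wilsons_lemma p
    have h4' : (n.factorial : ZMod p) * ((-1) ^ n * n.factorial) = -1 := by
      rw [← h2, ← Nat.cast_mul, h1, h3]
    rw [hnodd.neg_one_pow] at h4'
    linear_combination -h4'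
  have hcast : ((2 * n + 2 : ℕ) : ZMod p) = 1 := by
    rw [show 2 * n + 2 = p + 1 by omega]
    push_cast [ZMod.natCast_self]
    ring
  have hfac : (((p + 1) / 2).factorial : ZMod p) = ((n : ZMod p) + 1) * n.factorial := by
    rw [hmn, Nat.factorial_succ]
    push_cast
    ring
  rcases mul_self_eq_one_iff.mp hkey with h | h
  · left
    rw [hfac, h, hmn]
    push_cast
    ring
  · right
    rw [hfac, h, hmn]
    push_cast at hcast ⊢
    linear_combination -hcast
end

section
/- Let p ≥ 3 be a prime. Then the number of fixed points of the factorial function modulo p equals one more than the number of times the residue class 1 is attained by the factorials; that is, |{x : 1 ≤ x ≤ p−1, x! ≡ x (mod p)}| = 1 + |{y : 1 ≤ y ≤ p−1, y! ≡ 1 (mod p)}|. Equivalently, the number of fixed points is r if and only if 1 is an (r−1)-ramification point of the factorial function modulo p. -/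
/-- For a prime `p ≥ 3`, the number of fixed points of the factorial function modulo `p`
(integers `1 ≤ x ≤ p−1` with `x! ≡ x (mod p)`) is one more than the number of integers
`1 ≤ y ≤ p−1` with `y! ≡ 1 (mod p)`. -/
theorem fixed_points_eq_one_add_hits_of_one (p : ℕ) (hp : p.Prime) (h3 : 3 ≤ p) :
    ((Finset.Icc 1 (p - 1)).filter
        (fun x : ℕ => ((x.factorial : ZMod p) = (x : ZMod p)))).card
      = 1 + ((Finset.Icc 1 (p - 1)).filter
        (fun y : ℕ => ((y.factorial : ZMod p) = 1))).card := by
  haveI : Fact p.Prime := ⟨hp⟩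
  have hp1 : 1 ≤ p - 1 := by omega
  -- key equivalence: for 1 ≤ x ≤ p-1, x! ≡ x ↔ (x-1)! ≡ 1
  have key : ∀ x, 1 ≤ x → x ≤ p - 1 →
      (((x.factorial : ZMod p) = (x : ZMod p)) ↔ (((x-1).factorial : ZMod p) = 1)) := by
    intro x hx1 hx2
    obtain ⟨k, rfl⟩ : ∃ k, x = k + 1 := ⟨x - 1, by omega⟩
    have hxne : ((k + 1 : ℕ) : ZMod p) ≠ 0 := by
      rw [Ne, ZMod.natCast_eq_zero_iff]
      intro hdvd
      have := Nat.le_of_dvd (by omega) hdvd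
      omega
    rw [Nat.factorial_succ]
    push_cast
    rw [mul_right_eq_self₀]
    constructor
    · rintro (h | h)
      · exact h
      · exact absurd h (by push_cast at hxne ⊢; exact hxne)
    · intro h; exact Or.inl h
  -- step 1: LHS = count over Icc 0 (p-2) of z! = 1
  have h1 : ((Finset.Icc 1 (p - 1)).filter
        (fun x : ℕ => ((x.factorial : ZMod p) = (x : ZMod p)))).card
      = ((Finset.Icc 0 (p - 2)).filter
        (fun z : ℕ => ((z.factorial : ZMod p) = 1))).card := by
    apply Finset.card_bij (fun x _ => x - 1)
    · intro x hx
      simp only [Finset.mem_filter, Finset.mem_Icc] at hx ⊢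
      refine ⟨⟨by omega, by omega⟩, ?_⟩
      exact (key x hx.1.1 hx.1.2).mp hx.2
    · intro a ha b hb hab
      simp only [Finset.mem_filter, Finset.mem_Icc] at ha hb
      omega
    · intro z hz
      simp only [Finset.mem_filter, Finset.mem_Icc] at hz
      refine ⟨z + 1, ?_, by omega⟩
      simp only [Finset.mem_filter, Finset.mem_Icc]
      refine ⟨⟨by omega, by omega⟩, ?_⟩
      rw [key (z+1) (by omega) (by omega)]
      simpa using hz.2
  -- step 2: split off 0
  have h2 : (Finset.Icc 0 (p - 2)) = insert 0 (Finset.Icc 1 (p - 2)) := by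
    ext a
    simp only [Finset.mem_insert, Finset.mem_Icc]
    omega
  -- step 3: filter over Icc 1 (p-2) = filter over Icc 1 (p-1) (p-1 fails by Wilson)
  have h3' : ((Finset.Icc 1 (p - 2)).filter
        (fun y : ℕ => ((y.factorial : ZMod p) = 1)))
      = ((Finset.Icc 1 (p - 1)).filter
        (fun y : ℕ => ((y.factorial : ZMod p) = 1))) := by
    ext a
    simp only [Finset.mem_filter, Finset.mem_Icc]
    constructor
    · rintro ⟨⟨ha1, ha2⟩, ha3⟩; exact ⟨⟨ha1, by omega⟩, ha3⟩
    · rintro ⟨⟨ha1, ha2⟩, ha3⟩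
      refine ⟨⟨ha1, ?_⟩, ha3⟩
      by_contra h
      have : a = p - 1 := by omega
      subst this
      rw [ZMod.wilsons_lemma] at ha3
      have hne : (-1 : ZMod p) ≠ 1 := by
        intro hh
        have : ((2 : ℕ) : ZMod p) = 0 := by push_cast; linear_combination -hh
        rw [ZMod.natCast_eq_zero_iff] at this
        have := Nat.le_of_dvd (by norm_num) this
        omega
      exact hne ha3
  rw [h1, h2, Finset.filter_insert]
  simp only [Nat.factorial_zero, Nat.cast_one, if_true]
  rw [Finset.card_insert_of_notMem (by simp), h3']
  omega
end
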